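/- arXiv:1204.0429 — 2 statements merged into one kernel-verified Lean document; each statement's English description precedes it below -/
import Mathlib

section
/- Let X be a random vector with positive finite information dimension d(X), and let Y = g(X) for a measurable function g. If the conditional information dimension d(X|Y=y) exists and is finite for P_Y-almost every y, then the relative information loss equals l(X→Y) = d(X|Y)/d(X), where d(X|Y) = ∫ d(X|Y=y) dP_Y(y). -/
open MeasureTheory ProbabilityTheory Filter Real Set

/-- Component quantization `x ↦ ⌊kx⌋/k`. -/
noncomputable def qz (k : ℕ) (x : ℝ) : ℝ := ⌊(k : ℝ) * x⌋ / k

/-- Shannon entropy (in nats) of a measure, computed from its atoms. -/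
noncomputable def mEnt {α : Type*} [MeasurableSpace α] (μ : Measure α) : ℝ :=
  ∑' a : α, Real.negMulLog (μ {a}).toReal

/-- Conditional Shannon entropy `H(Z | Y)`, via the regular conditional distribution. -/
noncomputable def condEnt {Ω α β : Type*} [MeasurableSpace Ω] [MeasurableSpace α]
    [StandardBorelSpace α] [Nonempty α] [MeasurableSpace β]
    (P : Measure Ω) [IsFiniteMeasure P] (Z : Ω → α) (Y : Ω → β) : ℝ :=
  ∫ y, mEnt ((condDistrib Z Y P) y) ∂(P.map Y)



open scoped ENNReal

section RelLossAux


lemma tsum_nonneg_eq_toReal {ι : Type*} {f : ι → ℝ} (h : ∀ i, 0 ≤ f i) :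
    ∑' i, f i = (∑' i, ENNReal.ofReal (f i)).toReal := by
  by_cases hs : Summable f
  · rw [← ENNReal.ofReal_tsum_of_nonneg h hs, ENNReal.toReal_ofReal (tsum_nonneg fun i => h i)]
  · rw [tsum_eq_zero_of_not_summable hs]
    have htop : (∑' i, ENNReal.ofReal (f i)) = ⊤ := by
      by_contra hne
      have h2 : Summable (fun i => (f i).toNNReal) := by
        rw [← ENNReal.tsum_coe_ne_top_iff_summable]
        simpa [ENNReal.ofReal] using hne
      have h3 : Summable f := by
        refine (NNReal.summable_coe.2 h2).congr fun i => ?_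
        exact Real.coe_toNNReal _ (h i)
      exact hs h3
    simp [htop]

/-- ENNReal-valued entropy. -/
noncomputable def eH {γ : Type*} [MeasurableSpace γ] (μ : Measure γ) : ℝ≥0∞ :=
  ∑' a : γ, ENNReal.ofReal (Real.negMulLog (μ {a}).toReal)

lemma toReal_le_one {γ : Type*} [MeasurableSpace γ] (μ : Measure γ)
    [IsProbabilityMeasure μ] (s : Set γ) : (μ s).toReal ≤ 1 := by
  have := ENNReal.toReal_mono (a := μ s) ENNReal.one_ne_top prob_le_one
  simpa using this

lemma mEnt_eq_toReal_eH {γ : Type*} [MeasurableSpace γ] (μ : Measure γ)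
    [IsProbabilityMeasure μ] : mEnt μ = (eH μ).toReal := by
  exact tsum_nonneg_eq_toReal fun a =>
    Real.negMulLog_nonneg ENNReal.toReal_nonneg (toReal_le_one μ _)

lemma eH_map_of_injective {γ₁ γ₂ : Type*} [MeasurableSpace γ₁] [MeasurableSpace γ₂]
    [MeasurableSingletonClass γ₁] [MeasurableSingletonClass γ₂]
    (μ : Measure γ₁) {e : γ₁ → γ₂} (he : Measurable e) (hinj : Function.Injective e) :
    eH (μ.map e) = eH μ := by
  unfold eH
  rw [← hinj.tsum_eq (f := fun a => ENNReal.ofReal (Real.negMulLog ((μ.map e) {a}).toReal))]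
  · refine tsum_congr fun j => ?_
    rw [Measure.map_apply he (measurableSet_singleton _)]
    have : e ⁻¹' {e j} = {j} := by
      ext u; simp [hinj.eq_iff]
    rw [this]
  · intro a ha
    rcases em (a ∈ Set.range e) with h | h
    · exact h
    · exfalso
      apply ha
      simp only []
      rw [Measure.map_apply he (measurableSet_singleton _)]
      have : e ⁻¹' {a} = ∅ := by
        ext u; simp only [mem_preimage, mem_singleton_iff, mem_empty_iff_false, iff_false]
        exact fun hu => h ⟨u, hu⟩
      simp [this]

lemma measure_singleton_fst {γ₁ γ₂ : Type*} [MeasurableSpace γ₁] [MeasurableSpace γ₂]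
    [MeasurableSingletonClass γ₁] [MeasurableSingletonClass γ₂] [Countable γ₂]
    (σ : Measure (γ₁ × γ₂)) (b : γ₁) :
    (σ.map Prod.fst) {b} = ∑' c : γ₂, σ {(b, c)} := by
  rw [Measure.map_apply measurable_fst (measurableSet_singleton b)]
  have h : Prod.fst ⁻¹' ({b} : Set γ₁) = ⋃ c : γ₂, {(b, c)} := by
    ext ⟨u, v⟩
    simp [eq_comm]
  rw [h, measure_iUnion]
  · intro c c' hcc'
    simp only [Function.onFun, Set.disjoint_singleton, ne_eq, Prod.mk.injEq]
    exact fun hcon => hcc' hcon.2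
  · exact fun c => measurableSet_singleton _

lemma tsum_singleton_univ {γ : Type*} [MeasurableSpace γ] [MeasurableSingletonClass γ]
    [Countable γ] (μ : Measure γ) : ∑' a : γ, μ {a} = μ univ := by
  have h : (univ : Set γ) = ⋃ a : γ, {a} := by ext u; simp
  rw [h, measure_iUnion]
  · intro a a' haa'
    simp [Function.onFun, haa']
  · exact fun a => measurableSet_singleton _


section Ineq
variable {γ₁ γ₂ : Type*} [MeasurableSpace γ₁] [MeasurableSpace γ₂]
    [MeasurableSingletonClass γ₁] [MeasurableSingletonClass γ₂] [Countable γ₁] [Countable γ₂]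

lemma eH_map_fst_le (σ : Measure (γ₁ × γ₂)) [IsProbabilityMeasure σ] :
    eH (σ.map Prod.fst) ≤ eH σ := by
  haveI : IsProbabilityMeasure (σ.map Prod.fst) :=
    Measure.isProbabilityMeasure_map measurable_fst.aemeasurable
  unfold eH
  rw [ENNReal.tsum_prod']
  refine ENNReal.tsum_le_tsum fun b => ?_
  have hPb : (σ.map Prod.fst) {b} = ∑' c : γ₂, σ {(b, c)} := measure_singleton_fst σ b
  have hfin : (∑' c : γ₂, σ {(b, c)}) ≠ ⊤ := hPb ▸ measure_ne_top _ _
  set p : γ₂ → ℝ := fun c => (σ {(b, c)}).toReal with hp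
  set t : ℝ := ((σ.map Prod.fst) {b}).toReal with htdef
  have hsumm : Summable p := ENNReal.summable_toReal hfin
  have htsum : ∑' c, p c = t := by
    rw [htdef, hPb, ENNReal.tsum_toReal_eq (fun c => measure_ne_top _ _)]
  have ht0 : (0:ℝ) ≤ t := ENNReal.toReal_nonneg
  have ht1 : t ≤ 1 := by
    rw [htdef]
    exact ENNReal.toReal_mono ENNReal.one_ne_top prob_le_one |>.trans_eq ENNReal.toReal_one
  have hlog : 0 ≤ -Real.log t := by
    simp only [neg_nonneg]
    exact Real.log_nonpos ht0 ht1
  have key : Real.negMulLog t = ∑' c, p c * (-Real.log t) := by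
    rw [tsum_mul_right, htsum, Real.negMulLog]
    ring
  calc ENNReal.ofReal (Real.negMulLog t)
      = ∑' c, ENNReal.ofReal (p c * (-Real.log t)) := by
        rw [key]
        exact ENNReal.ofReal_tsum_of_nonneg
          (fun c => mul_nonneg ENNReal.toReal_nonneg hlog) (hsumm.mul_right _)
    _ ≤ ∑' c, ENNReal.ofReal (Real.negMulLog (p c)) := by
        refine ENNReal.tsum_le_tsum fun c => ENNReal.ofReal_le_ofReal ?_
        rcases eq_or_lt_of_le (ENNReal.toReal_nonneg : (0:ℝ) ≤ p c) with h0 | h0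
        · have h0' : p c = 0 := h0.symm
          simp [h0']
        · have hpc : p c ≤ t := htsum ▸ Summable.le_tsum hsumm c fun j _ => ENNReal.toReal_nonneg
          have : Real.log (p c) ≤ Real.log t := Real.log_le_log h0 hpc
          rw [Real.negMulLog, neg_mul_comm]
          have := mul_le_mul_of_nonneg_left (neg_le_neg this) (le_of_lt h0)
          linarith

lemma eH_map_snd_le (σ : Measure (γ₁ × γ₂)) [IsProbabilityMeasure σ] :
    eH (σ.map Prod.snd) ≤ eH σ := by
  haveI : IsProbabilityMeasure (σ.map Prod.swap) :=
    Measure.isProbabilityMeasure_map measurable_swap.aemeasurable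
  have h1 : σ.map Prod.snd = (σ.map Prod.swap).map Prod.fst := by
    rw [Measure.map_map measurable_fst measurable_swap]
    rfl
  rw [h1]
  exact (eH_map_fst_le (σ.map Prod.swap)).trans
    (le_of_eq (eH_map_of_injective σ measurable_swap Prod.swap_injective))

lemma sum_negMulLog_le {γ : Type*} (t : Finset γ) (p : γ → ℝ) (hp : ∀ c, 0 ≤ p c)
    {M : ℕ} (hM : t.card ≤ M) (h1 : 1 ≤ M) :
    ∑ c ∈ t, Real.negMulLog (p c)
      ≤ Real.negMulLog (∑ c ∈ t, p c) + (∑ c ∈ t, p c) * Real.log M := by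
  rcases Finset.eq_empty_or_nonempty t with rfl | hne
  · simp
  set S := ∑ c ∈ t, p c with hS
  have hS0 : (0:ℝ) ≤ S := Finset.sum_nonneg fun c _ => hp c
  rcases eq_or_lt_of_le hS0 with hSz | hSpos
  · have hz : ∀ c ∈ t, p c = 0 :=
      (Finset.sum_eq_zero_iff_of_nonneg fun c _ => hp c).1 hSz.symm
    have : ∑ c ∈ t, Real.negMulLog (p c) = 0 :=
      Finset.sum_eq_zero fun c hc => by rw [hz c hc, Real.negMulLog_zero]
    rw [this, ← hSz, Real.negMulLog_zero]
    simp
  · have hmpos : (0:ℝ) < (t.card : ℝ) := by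
      exact_mod_cast Nat.cast_pos.2 (Finset.card_pos.2 hne)
    set m : ℝ := (t.card : ℝ) with hm
    have hjensen := Real.concaveOn_negMulLog.le_map_sum (t := t)
      (w := fun _ => m⁻¹) (p := p) (fun i _ => by positivity)
      (by rw [Finset.sum_const, nsmul_eq_mul]; field_simp; exact hm.symm) (fun i _ => hp i)
    simp only [smul_eq_mul, ← Finset.mul_sum] at hjensen
    -- hjensen : m⁻¹ * ∑ negMulLog (p i) ≤ negMulLog (m⁻¹ * S)
    have hlogdiv : Real.negMulLog (m⁻¹ * S) = m⁻¹ * S * (Real.log m - Real.log S) := by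
      rw [Real.negMulLog]
      rw [show m⁻¹ * S = S / m by ring, Real.log_div (ne_of_gt hSpos) (ne_of_gt hmpos)]
      ring
    have hstep : ∑ c ∈ t, Real.negMulLog (p c) ≤ S * (Real.log m - Real.log S) := by
      have := mul_le_mul_of_nonneg_left hjensen (le_of_lt hmpos)
      rw [hlogdiv] at this
      calc ∑ c ∈ t, Real.negMulLog (p c) = m * (m⁻¹ * ∑ c ∈ t, Real.negMulLog (p c)) := by
            field_simp
        _ ≤ m * (m⁻¹ * S * (Real.log m - Real.log S)) := this
        _ = (m * m⁻¹) * (S * (Real.log m - Real.log S)) := by ring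
        _ = S * (Real.log m - Real.log S) := by
            rw [mul_inv_cancel₀ (ne_of_gt hmpos), one_mul]
    have hlogm : Real.log m ≤ Real.log M := by
      apply Real.log_le_log hmpos
      rw [hm]
      exact_mod_cast hM
    calc ∑ c ∈ t, Real.negMulLog (p c) ≤ S * (Real.log m - Real.log S) := hstep
      _ ≤ S * (Real.log M - Real.log S) := by
          apply mul_le_mul_of_nonneg_left _ hS0
          linarith
      _ = Real.negMulLog S + S * Real.log M := by
          rw [Real.negMulLog]; ring

lemma eH_le_eH_map_fst_add (σ : Measure (γ₁ × γ₂)) [IsProbabilityMeasure σ]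
    (T : γ₁ → Finset γ₂) {M : ℕ} (h1 : 1 ≤ M)
    (hT : ∀ b c, σ {(b, c)} ≠ 0 → c ∈ T b) (hcard : ∀ b, (T b).card ≤ M) :
    eH σ ≤ eH (σ.map Prod.fst) + ENNReal.ofReal (Real.log M) := by
  haveI : IsProbabilityMeasure (σ.map Prod.fst) :=
    Measure.isProbabilityMeasure_map measurable_fst.aemeasurable
  have hlogM : (0:ℝ) ≤ Real.log M := Real.log_nonneg (by exact_mod_cast h1)
  have key : ∀ b : γ₁,
      (∑' c : γ₂, ENNReal.ofReal (Real.negMulLog (σ {(b, c)}).toReal))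
      ≤ ENNReal.ofReal (Real.negMulLog (((σ.map Prod.fst) {b}).toReal))
        + (σ.map Prod.fst) {b} * ENNReal.ofReal (Real.log M) := by
    intro b
    have hnn : ∀ c ∈ T b, 0 ≤ Real.negMulLog ((σ {(b, c)}).toReal) := fun c _ =>
      Real.negMulLog_nonneg ENNReal.toReal_nonneg
        ((ENNReal.toReal_mono ENNReal.one_ne_top prob_le_one).trans_eq ENNReal.toReal_one)
    have inner : (∑' c : γ₂, ENNReal.ofReal (Real.negMulLog (σ {(b, c)}).toReal))
        = ENNReal.ofReal (∑ c ∈ T b, Real.negMulLog ((σ {(b, c)}).toReal)) := by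
      rw [ENNReal.ofReal_sum_of_nonneg hnn]
      refine tsum_eq_sum fun c hc => ?_
      have : σ {(b, c)} = 0 := by
        by_contra hne
        exact hc (hT b c hne)
      simp [this]
    have hPb : ((σ.map Prod.fst) {b}).toReal = ∑ c ∈ T b, (σ {(b, c)}).toReal := by
      rw [measure_singleton_fst σ b, ENNReal.tsum_toReal_eq (fun c => measure_ne_top _ _)]
      refine tsum_eq_sum fun c hc => ?_
      have : σ {(b, c)} = 0 := by
        by_contra hne
        exact hc (hT b c hne)
      simp [this]
    have hsum := sum_negMulLog_le (T b) (fun c => (σ {(b, c)}).toReal)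
      (fun c => ENNReal.toReal_nonneg) (hcard b) h1
    rw [inner]
    calc ENNReal.ofReal (∑ c ∈ T b, Real.negMulLog ((σ {(b, c)}).toReal))
        ≤ ENNReal.ofReal (Real.negMulLog (((σ.map Prod.fst) {b}).toReal)
            + ((σ.map Prod.fst) {b}).toReal * Real.log M) := by
          refine ENNReal.ofReal_le_ofReal ?_
          rw [hPb]
          exact hsum
      _ ≤ ENNReal.ofReal (Real.negMulLog (((σ.map Prod.fst) {b}).toReal))
            + ENNReal.ofReal (((σ.map Prod.fst) {b}).toReal * Real.log M) :=
          ENNReal.ofReal_add_le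
      _ = ENNReal.ofReal (Real.negMulLog (((σ.map Prod.fst) {b}).toReal))
            + (σ.map Prod.fst) {b} * ENNReal.ofReal (Real.log M) := by
          rw [ENNReal.ofReal_mul ENNReal.toReal_nonneg,
            ENNReal.ofReal_toReal (measure_ne_top _ _)]
  calc eH σ = ∑' b : γ₁, ∑' c : γ₂, ENNReal.ofReal (Real.negMulLog (σ {(b, c)}).toReal) := by
        unfold eH; rw [ENNReal.tsum_prod']
    _ ≤ ∑' b : γ₁, (ENNReal.ofReal (Real.negMulLog (((σ.map Prod.fst) {b}).toReal))
          + (σ.map Prod.fst) {b} * ENNReal.ofReal (Real.log M)) := ENNReal.tsum_le_tsum key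
    _ = eH (σ.map Prod.fst) + (∑' b : γ₁, (σ.map Prod.fst) {b}) * ENNReal.ofReal (Real.log M) := by
        rw [ENNReal.tsum_add, ENNReal.tsum_mul_right]; rfl
    _ ≤ eH (σ.map Prod.fst) + 1 * ENNReal.ofReal (Real.log M) := by
        refine add_le_add_right (mul_le_mul_left (α := ℝ≥0∞) ?_ _) _
        rw [tsum_singleton_univ]
        exact prob_le_one
    _ = eH (σ.map Prod.fst) + ENNReal.ofReal (Real.log M) := by rw [one_mul]

end Ineq

section Quant
variable {N : ℕ}

/-- integer-valued quantizer. -/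
noncomputable def flq (N k : ℕ) : (Fin N → ℝ) → (Fin N → ℤ) := fun x i => ⌊(k : ℝ) * x i⌋

noncomputable def qv (N k : ℕ) : (Fin N → ℝ) → (Fin N → ℝ) := fun x i => qz k (x i)

noncomputable def emq (N k : ℕ) : (Fin N → ℤ) → (Fin N → ℝ) := fun j i => (j i : ℝ) / k

lemma measurable_flq (N k : ℕ) : Measurable (flq N k) :=
  measurable_pi_iff.2 fun i => ((measurable_pi_apply i).const_mul _).floor

lemma measurable_emq (N k : ℕ) : Measurable (emq N k) := measurable_of_countable _

lemma measurable_qv (N k : ℕ) : Measurable (qv N k) := by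
  have : qv N k = (emq N k) ∘ (flq N k) := rfl
  rw [this]
  exact (measurable_emq N k).comp (measurable_flq N k)

lemma emq_injective (N : ℕ) {k : ℕ} (hk : 1 ≤ k) : Function.Injective (emq N k) := by
  intro j j' h
  funext i
  have h2 := congrFun h i
  simp only [emq] at h2
  have hkne : ((k : ℝ)) ≠ 0 := by positivity
  field_simp at h2
  exact_mod_cast h2

/-- reduction: real entropy of the real-quantized measure equals ENNReal entropy of
the integer-quantized measure. -/
lemma mEnt_map_qv {k : ℕ} (hk : 1 ≤ k) (ρ : Measure (Fin N → ℝ)) [IsProbabilityMeasure ρ] :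
    mEnt (ρ.map (qv N k)) = (eH (ρ.map (flq N k))).toReal := by
  have hmap : ρ.map (qv N k) = (ρ.map (flq N k)).map (emq N k) := by
    rw [Measure.map_map (measurable_emq N k) (measurable_flq N k)]
    rfl
  haveI : IsProbabilityMeasure (ρ.map (qv N k)) :=
    Measure.isProbabilityMeasure_map (measurable_qv N k).aemeasurable
  rw [mEnt_eq_toReal_eH, hmap,
    eH_map_of_injective _ (measurable_emq N k) (emq_injective N hk)]

/-- fiber bound: entropy at scale `k` exceeds entropy at scale `k₀` by at most `N log (k+1)`. -/
lemma eH_flq_le (ρ : Measure (Fin N → ℝ)) [IsProbabilityMeasure ρ] {k k₀ : ℕ}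
    (hk : 1 ≤ k) (hk₀ : 1 ≤ k₀) :
    eH (ρ.map (flq N k)) ≤ eH (ρ.map (flq N k₀)) + ENNReal.ofReal (Real.log ((k+1)^N : ℕ)) := by
  set Gp : (Fin N → ℝ) → (Fin N → ℤ) × (Fin N → ℤ) := fun x => (flq N k₀ x, flq N k x) with hGp
  have hGpm : Measurable Gp := (measurable_flq N k₀).prodMk (measurable_flq N k)
  set σ : Measure ((Fin N → ℤ) × (Fin N → ℤ)) := ρ.map Gp with hσ
  haveI : IsProbabilityMeasure σ := Measure.isProbabilityMeasure_map hGpm.aemeasurable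
  have h1 : ρ.map (flq N k) = σ.map Prod.snd := by
    rw [hσ, Measure.map_map measurable_snd hGpm]; rfl
  have h2 : σ.map Prod.fst = ρ.map (flq N k₀) := by
    rw [hσ, Measure.map_map measurable_fst hGpm]; rfl
  set T : (Fin N → ℤ) → Finset (Fin N → ℤ) := fun b =>
    Fintype.piFinset fun i => Finset.Icc (⌊(k : ℝ) * b i / (k₀ : ℝ)⌋) (⌊(k : ℝ) * b i / (k₀ : ℝ)⌋ + k)
    with hT
  have hTmem : ∀ b c, σ {(b, c)} ≠ 0 → c ∈ T b := by
    intro b c hne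
    have hpre : Gp ⁻¹' {(b, c)} ≠ ∅ := by
      intro hempty
      apply hne
      rw [hσ, Measure.map_apply hGpm (measurableSet_singleton _), hempty]
      simp
    obtain ⟨x, hx⟩ := nonempty_iff_ne_empty.2 hpre
    simp only [mem_preimage, mem_singleton_iff, Prod.mk.injEq, hGp] at hx
    obtain ⟨hb, hc⟩ := hx
    rw [hT, Fintype.mem_piFinset]
    intro i
    have hbi : ⌊(k₀ : ℝ) * x i⌋ = b i := congrFun hb i
    have hci : ⌊(k : ℝ) * x i⌋ = c i := congrFun hc i
    have hk0pos : (0:ℝ) < (k₀ : ℝ) := by exact_mod_cast hk₀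
    have hkpos : (0:ℝ) < (k : ℝ) := by exact_mod_cast hk
    set q : ℝ := (k : ℝ) * b i / (k₀ : ℝ) with hq
    -- bounds on x i from hbi
    have hxlo : ((b i : ℝ)) ≤ (k₀ : ℝ) * x i := by
      rw [← hbi]; exact Int.floor_le _
    have hxhi : (k₀ : ℝ) * x i < (b i : ℝ) + 1 := by
      rw [← hbi]; exact Int.lt_floor_add_one _
    -- hence q ≤ k * x i < q + k / k₀
    have hq1 : q ≤ (k : ℝ) * x i := by
      rw [hq, div_le_iff₀ hk0pos]
      calc (k : ℝ) * (b i : ℝ) ≤ (k : ℝ) * ((k₀:ℝ) * x i) := by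
            exact mul_le_mul_of_nonneg_left hxlo (le_of_lt hkpos)
        _ = (k : ℝ) * x i * (k₀ : ℝ) := by ring
    have hq2 : (k : ℝ) * x i < q + (k : ℝ) / (k₀ : ℝ) := by
      rw [hq, ← add_div, lt_div_iff₀ hk0pos]
      calc (k : ℝ) * x i * (k₀ : ℝ) = (k : ℝ) * ((k₀:ℝ) * x i) := by ring
        _ < (k : ℝ) * ((b i : ℝ) + 1) := by
            exact (mul_lt_mul_iff_right₀ hkpos).2 hxhi
        _ = (k : ℝ) * (b i : ℝ) + (k : ℝ) := by ring
    have hkk0 : (k : ℝ) / (k₀ : ℝ) ≤ (k : ℝ) := by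
      rw [div_le_iff₀ hk0pos]
      nlinarith [hk0pos, hkpos, (by exact_mod_cast hk₀ : (1:ℝ) ≤ (k₀:ℝ))]
    simp only [Finset.mem_Icc]
    constructor
    · -- ⌊q⌋ ≤ c i
      rw [← hci]
      exact Int.le_floor.2 (le_trans (Int.floor_le q) hq1)
    · -- c i ≤ ⌊q⌋ + k
      have h1 : ((c i : ℝ)) ≤ (k:ℝ) * x i := by rw [← hci]; exact Int.floor_le _
      have h2 : ((c i : ℝ)) < q + (k:ℝ) := lt_of_le_of_lt h1 (lt_of_lt_of_le hq2 (by linarith))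
      have h3 : ((c i : ℝ)) < (⌊q⌋ + 1 : ℤ) + (k:ℝ) := by
        have := Int.lt_floor_add_one q
        push_cast
        push_cast at this
        linarith
      have h4 : (c i : ℝ) < ((⌊q⌋ + 1 + (k:ℤ) : ℤ) : ℝ) := by push_cast; push_cast at h3; linarith
      have h5 : c i < ⌊q⌋ + 1 + (k : ℤ) := by exact_mod_cast h4
      omega
  have hcard : ∀ b, (T b).card ≤ (k+1)^N := by
    intro b
    rw [hT, Fintype.card_piFinset]
    refine le_of_eq ?_
    have hstep : ∀ i : Fin N,
        (Finset.Icc (⌊(k : ℝ) * b i / (k₀ : ℝ)⌋) (⌊(k : ℝ) * b i / (k₀ : ℝ)⌋ + k)).card = k + 1 := by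
      intro i
      rw [Int.card_Icc]
      omega
    rw [Finset.prod_congr rfl fun i _ => hstep i, Finset.prod_const]
    simp
  have hM1 : 1 ≤ (k+1)^N := Nat.one_le_pow _ _ (by omega)
  calc eH (ρ.map (flq N k)) = eH (σ.map Prod.snd) := by rw [h1]
    _ ≤ eH σ := eH_map_snd_le σ
    _ ≤ eH (σ.map Prod.fst) + ENNReal.ofReal (Real.log ((k+1)^N : ℕ)) :=
        eH_le_eH_map_fst_add σ T hM1 hTmem hcard
    _ = eH (ρ.map (flq N k₀)) + ENNReal.ofReal (Real.log ((k+1)^N : ℕ)) := by rw [h2]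

end Quant

section Aux

lemma negMulLog_le_one {x : ℝ} (h0 : 0 ≤ x) (h1 : x ≤ 1) : Real.negMulLog x ≤ 1 := by
  rcases eq_or_lt_of_le h0 with h | h
  · simp [← h]
  · have hl : Real.log x⁻¹ ≤ x⁻¹ - 1 := Real.log_le_sub_one_of_pos (by positivity)
    have hlog : -Real.log x ≤ x⁻¹ - 1 := by rwa [Real.log_inv] at hl
    calc Real.negMulLog x = x * (-Real.log x) := by rw [Real.negMulLog]; ring
      _ ≤ x * (x⁻¹ - 1) := mul_le_mul_of_nonneg_left hlog h0
      _ = 1 - x := by field_simp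
      _ ≤ 1 := by linarith

lemma compProd_map_right {β γ γ' : Type*} [MeasurableSpace β] [MeasurableSpace γ]
    [MeasurableSpace γ'] (ν : Measure β) [SFinite ν] (κ : Kernel β γ) [IsSFiniteKernel κ]
    {f : γ → γ'} (hf : Measurable f) :
    (ν ⊗ₘ κ).map (Prod.map id f) = ν ⊗ₘ (κ.map f) := by
  haveI : IsSFiniteKernel (κ.map f) := Kernel.IsSFiniteKernel.map κ f
  ext s hs
  rw [Measure.map_apply (measurable_id.prodMap hf) hs,
    Measure.compProd_apply ((measurable_id.prodMap hf) hs), Measure.compProd_apply hs]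
  refine lintegral_congr fun y => ?_
  rw [Kernel.map_apply' _ hf _ (measurable_prodMk_left hs)]
  rfl

lemma measurable_W {N : ℕ} {β : Type*} [MeasurableSpace β] (κ : Kernel β (Fin N → ℝ)) (k : ℕ) :
    Measurable (fun y => eH ((κ y).map (flq N k))) := by
  have hrepr : (fun y => eH ((κ y).map (flq N k)))
      = fun y => ∑' j : Fin N → ℤ,
          ENNReal.ofReal (Real.negMulLog ((κ y ((flq N k) ⁻¹' {j})).toReal)) := by
    funext y
    exact tsum_congr fun j => by
      rw [Measure.map_apply (measurable_flq N k) (measurableSet_singleton _)]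
  rw [hrepr]
  refine Measurable.ennreal_tsum fun j => ?_
  exact (Real.continuous_negMulLog.measurable.comp
    ((κ.measurable_coe ((measurable_flq N k) (measurableSet_singleton j))).ennreal_toReal)).ennreal_ofReal

end Aux

/-- If `X` has positive finite information dimension
`d(X) = lim H(X̂ₙ)/log n`, `Y = g(X)` for measurable `g`, and the conditional information
dimension `d(X|Y=y)` exists and is finite for `P_Y`-a.e. `y` (with integrable average), then the
relative information loss exists and equals `l(X→Y) = d(X|Y)/d(X)` where
`d(X|Y) = ∫ d(X|Y=y) dP_Y(y)`. -/
theorem relative_loss_eq_ratio_of_information_dimensions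
    {Ω : Type*} [MeasurableSpace Ω] (P : Measure Ω) [IsProbabilityMeasure P]
    {N : ℕ} (X : Ω → (Fin N → ℝ)) (hX : Measurable X)
    {β : Type*} [MeasurableSpace β] (g : (Fin N → ℝ) → β) (hg : Measurable g)
    (d : ℝ) (hd_pos : 0 < d)
    (hdim : Tendsto (fun k : ℕ =>
        mEnt (P.map (fun ω i => qz k (X ω i))) / Real.log k) atTop (nhds d))
    (δ : β → ℝ)
    (hδint : Integrable δ (P.map (fun ω => g (X ω))))
    (hconddim : ∀ᵐ y ∂(P.map (fun ω => g (X ω))),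
      Tendsto (fun k : ℕ =>
          mEnt (((condDistrib X (fun ω => g (X ω)) P) y).map (fun x i => qz k (x i))) /
            Real.log k) atTop (nhds (δ y))) :
    Tendsto (fun k : ℕ =>
        condEnt P (fun ω i => qz k (X ω i)) (fun ω => g (X ω)) /
          mEnt (P.map (fun ω i => qz k (X ω i)))) atTop
      (nhds ((∫ y, δ y ∂(P.map (fun ω => g (X ω)))) / d)) := by
  classical
  set Y : Ω → β := fun ω => g (X ω) with hYdef
  have hY : Measurable Y := hg.comp hX
  set ν : Measure β := P.map Y with hν
  haveI hprobν : IsProbabilityMeasure ν := Measure.isProbabilityMeasure_map hY.aemeasurable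
  set μX : Measure (Fin N → ℝ) := P.map X with hμX
  haveI hprobX : IsProbabilityMeasure μX := Measure.isProbabilityMeasure_map hX.aemeasurable
  set κ : Kernel β (Fin N → ℝ) := condDistrib X Y P with hκ
  haveI hmk : IsMarkovKernel κ := by rw [hκ]; infer_instance
  haveI hprobκ : ∀ y, IsProbabilityMeasure (κ y) := fun y => hmk.isProbabilityMeasure y
  have hYX : Measurable fun ω => (Y ω, X ω) := hY.prodMk hX
  set ρp : Measure (β × (Fin N → ℝ)) := P.map (fun ω => (Y ω, X ω)) with hρp
  haveI : IsProbabilityMeasure ρp := Measure.isProbabilityMeasure_map hYX.aemeasurable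
  have hfst : ρp.fst = ν := Measure.fst_map_prodMk hX
  have hcomp : ν ⊗ₘ κ = ρp := by
    rw [hκ, condDistrib_def, ← hfst]
    exact ρp.disintegrate ρp.condKernel
  -- marginal identity
  have hmarg : ∀ S : Set (Fin N → ℝ), MeasurableSet S → ∫⁻ y, κ y S ∂ν = μX S := by
    intro S hS
    have h1 : ρp (Prod.snd ⁻¹' S) = μX S := by
      rw [hρp, Measure.map_apply hYX (measurable_snd hS), hμX, Measure.map_apply hX hS]
      rfl
    rw [← h1, ← hcomp, Measure.compProd_apply (measurable_snd hS)]
    rfl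
  -- kernel identity
  have hker : ∀ k : ℕ,
      ∀ᵐ y ∂ν, (κ.map (qv N k)) y = condDistrib (fun ω i => qz k (X ω i)) Y P y := by
    intro k
    haveI : IsMarkovKernel (κ.map (qv N k)) := Kernel.IsMarkovKernel.map κ (measurable_qv N k)
    refine (condDistrib_ae_eq_of_measure_eq_compProd (μ := P) (κ := κ.map (qv N k)) Y
      ((measurable_qv N k).comp hX).aemeasurable ?_).symm
    calc P.map (fun ω => (Y ω, (fun i => qz k (X ω i))))
        = ρp.map (Prod.map id (qv N k)) := by
          rw [hρp, Measure.map_map (measurable_id.prodMap (measurable_qv N k)) hYX]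
          rfl
      _ = (ν ⊗ₘ κ).map (Prod.map id (qv N k)) := by rw [hcomp]
      _ = ν ⊗ₘ (κ.map (qv N k)) := compProd_map_right ν κ (measurable_qv N k)
  -- conditional entropies
  set W : ℕ → β → ℝ≥0∞ := fun k y => eH ((κ y).map (flq N k)) with hW
  have hWmeas : ∀ k, Measurable (W k) := fun k => measurable_W κ k
  have hcondEnt : ∀ k : ℕ, 1 ≤ k →
      condEnt P (fun ω i => qz k (X ω i)) Y = ∫ y, (W k y).toReal ∂ν := by
    intro k hk
    have hae : ∀ᵐ y ∂ν,
        mEnt ((condDistrib (fun ω i => qz k (X ω i)) Y P) y) = (W k y).toReal := by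
      filter_upwards [hker k] with y hy
      rw [← hy, Kernel.map_apply κ (measurable_qv N k)]
      exact mEnt_map_qv hk (κ y)
    simp only [condEnt]
    rw [← hν]
    exact integral_congr_ae hae
  -- choice of k₀
  have hmapmap : ∀ k : ℕ, P.map (fun ω i => qz k (X ω i)) = μX.map (qv N k) := by
    intro k
    rw [hμX, Measure.map_map (measurable_qv N k) hX]
    rfl
  have hevpos : ∀ᶠ k : ℕ in atTop,
      0 < mEnt (P.map (fun ω i => qz k (X ω i))) / Real.log k :=
    hdim.eventually (eventually_gt_nhds hd_pos)
  obtain ⟨k₀, hk₀pos, hk₀1⟩ := (hevpos.and (eventually_ge_atTop 1)).exists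
  have hE0ne : eH (μX.map (flq N k₀)) ≠ ⊤ := by
    intro htop
    have h0 : mEnt (P.map (fun ω i => qz k₀ (X ω i))) = 0 := by
      rw [hmapmap k₀, mEnt_map_qv hk₀1 μX, htop]
      simp
    rw [h0] at hk₀pos
    simp at hk₀pos
  -- Jensen: integrability of W k₀
  set Sj : (Fin N → ℤ) → Set (Fin N → ℝ) := fun j => (flq N k₀) ⁻¹' {j} with hSj
  have hSjm : ∀ j, MeasurableSet (Sj j) :=
    fun j => (measurable_flq N k₀) (measurableSet_singleton j)
  have hWrepr : ∀ (k : ℕ) (y : β), W k y = ∑' j : Fin N → ℤ,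
      ENNReal.ofReal (Real.negMulLog ((κ y ((flq N k) ⁻¹' {j})).toReal)) := by
    intro k y
    exact tsum_congr fun j => by
      rw [Measure.map_apply (measurable_flq N k) (measurableSet_singleton _)]
  have hgj_meas : ∀ j, Measurable fun y => (κ y (Sj j)).toReal :=
    fun j => (κ.measurable_coe (hSjm j)).ennreal_toReal
  have hgj_int : ∀ j, Integrable (fun y => (κ y (Sj j)).toReal) ν := by
    intro j
    refine integrable_toReal_of_lintegral_ne_top (κ.measurable_coe (hSjm j)).aemeasurable ?_
    rw [hmarg (Sj j) (hSjm j)]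
    exact measure_ne_top _ _
  have hmean : ∀ j, ∫ y, (κ y (Sj j)).toReal ∂ν = (μX (Sj j)).toReal := by
    intro j
    rw [integral_toReal (κ.measurable_coe (hSjm j)).aemeasurable
      (ae_of_all _ fun y => measure_lt_top _ _), hmarg (Sj j) (hSjm j)]
  have hrange : ∀ j (y : β), (κ y (Sj j)).toReal ∈ Icc (0:ℝ) 1 := by
    intro j y
    exact ⟨ENNReal.toReal_nonneg, toReal_le_one (κ y) _⟩
  have hnml_nonneg : ∀ j (y : β), 0 ≤ Real.negMulLog ((κ y (Sj j)).toReal) := by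
    intro j y
    exact Real.negMulLog_nonneg (hrange j y).1 (hrange j y).2
  have hnml_int : ∀ j, Integrable (fun y => Real.negMulLog ((κ y (Sj j)).toReal)) ν := by
    intro j
    refine (integrable_const (1:ℝ)).mono'
      ((Real.continuous_negMulLog.measurable.comp (hgj_meas j)).aestronglyMeasurable) ?_
    refine ae_of_all _ fun y => ?_
    rw [Real.norm_eq_abs, abs_of_nonneg (hnml_nonneg j y)]
    exact negMulLog_le_one (hrange j y).1 (hrange j y).2
  have hjensen : ∀ j, ∫ y, Real.negMulLog ((κ y (Sj j)).toReal) ∂ν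
      ≤ Real.negMulLog ((μX (Sj j)).toReal) := by
    intro j
    have h := ConcaveOn.le_map_integral (μ := ν) (s := Icc (0:ℝ) 1)
      (f := fun y => (κ y (Sj j)).toReal) (g := Real.negMulLog)
      (Real.concaveOn_negMulLog.subset Icc_subset_Ici_self (convex_Icc 0 1))
      Real.continuous_negMulLog.continuousOn isClosed_Icc
      (ae_of_all _ fun y => hrange j y) (hgj_int j) (hnml_int j)
    rwa [hmean j] at h
  have hlint : ∫⁻ y, W k₀ y ∂ν ≤ eH (μX.map (flq N k₀)) := by
    calc ∫⁻ y, W k₀ y ∂ν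
        = ∑' j : Fin N → ℤ, ∫⁻ y, ENNReal.ofReal (Real.negMulLog ((κ y (Sj j)).toReal)) ∂ν := by
          simp_rw [hWrepr k₀]
          exact lintegral_tsum
            (f := fun j y => ENNReal.ofReal (Real.negMulLog ((κ y ((flq N k₀) ⁻¹' {j})).toReal)))
            (fun j => ((Real.continuous_negMulLog.measurable.comp
              (hgj_meas j)).ennreal_ofReal).aemeasurable)
      _ ≤ ∑' j : Fin N → ℤ, ENNReal.ofReal (Real.negMulLog ((μX (Sj j)).toReal)) := by
          refine ENNReal.tsum_le_tsum fun j => ?_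
          rw [← ofReal_integral_eq_lintegral_ofReal (hnml_int j)
            (ae_of_all _ fun y => hnml_nonneg j y)]
          exact ENNReal.ofReal_le_ofReal (hjensen j)
      _ = eH (μX.map (flq N k₀)) := by
          exact tsum_congr fun j => by
            rw [Measure.map_apply (measurable_flq N k₀) (measurableSet_singleton _)]
  have hlintne : ∫⁻ y, W k₀ y ∂ν ≠ ⊤ := ne_top_of_le_ne_top hE0ne hlint
  have hGint : Integrable (fun y => (W k₀ y).toReal) ν :=
    integrable_toReal_of_lintegral_ne_top (hWmeas k₀).aemeasurable hlintne
  have hW0fin : ∀ᵐ y ∂ν, W k₀ y < ⊤ := ae_lt_top (hWmeas k₀) hlintne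
  -- domination
  have hWle : ∀ k, 1 ≤ k → ∀ y, W k y ≤ W k₀ y + ENNReal.ofReal (Real.log ((k+1)^N : ℕ)) :=
    fun k hk y => eH_flq_le (κ y) hk hk₀1
  set F : ℕ → β → ℝ := fun k y => (W k y).toReal / Real.log k with hF
  have hFmeas : ∀ k : ℕ, AEStronglyMeasurable (F k) ν :=
    fun k => ((hWmeas k).ennreal_toReal.div_const _).aestronglyMeasurable
  have hbound : ∀ᶠ k : ℕ in atTop, ∀ᵐ y ∂ν, ‖F k y‖ ≤ (W k₀ y).toReal + 2 * N := by
    filter_upwards [eventually_ge_atTop 3] with k hk3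
    filter_upwards [hW0fin] with y hy
    have hk1 : 1 ≤ k := by omega
    have hk3' : (3:ℝ) ≤ (k:ℝ) := by exact_mod_cast hk3
    have hlogk : 1 ≤ Real.log k := by
      rw [Real.le_log_iff_exp_le (by positivity)]
      calc rexp 1 ≤ 2.7182818286 := Real.exp_one_lt_d9.le
        _ ≤ 3 := by norm_num
        _ ≤ (k:ℝ) := hk3'
    have hlogkpos : (0:ℝ) < Real.log k := by linarith
    have hFnn : 0 ≤ F k y := div_nonneg ENNReal.toReal_nonneg hlogkpos.le
    rw [Real.norm_eq_abs, abs_of_nonneg hFnn]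
    have hlogcast : Real.log (((k+1)^N : ℕ) : ℝ) = (N:ℝ) * Real.log ((k:ℝ)+1) := by
      push_cast
      rw [Real.log_pow]
    have step1 : (W k y).toReal ≤ (W k₀ y).toReal + (N:ℝ) * Real.log ((k:ℝ)+1) := by
      have h := hWle k hk1 y
      have hne : W k₀ y + ENNReal.ofReal (Real.log (((k+1)^N : ℕ) : ℝ)) ≠ ⊤ :=
        ENNReal.add_ne_top.2 ⟨hy.ne, ENNReal.ofReal_ne_top⟩
      have h2 := ENNReal.toReal_mono hne h
      rw [ENNReal.toReal_add hy.ne ENNReal.ofReal_ne_top,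
        ENNReal.toReal_ofReal (by
          rw [hlogcast]
          have : (0:ℝ) ≤ Real.log ((k:ℝ)+1) := Real.log_nonneg (by linarith)
          positivity), hlogcast] at h2
      exact h2
    have hlog2 : Real.log ((k:ℝ)+1) ≤ 2 * Real.log k := by
      calc Real.log ((k:ℝ)+1) ≤ Real.log ((k:ℝ)^2) :=
            Real.log_le_log (by linarith) (by nlinarith)
        _ = 2 * Real.log k := by
            rw [show ((k:ℝ)^2) = (k:ℝ)^(2:ℕ) by norm_num, Real.log_pow]
            norm_num
    have step2 : (W k y).toReal ≤ (W k₀ y).toReal + 2 * (N:ℝ) * Real.log k := by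
      have : (N:ℝ) * Real.log ((k:ℝ)+1) ≤ (N:ℝ) * (2 * Real.log k) :=
        mul_le_mul_of_nonneg_left hlog2 (Nat.cast_nonneg N)
      linarith
    calc F k y = (W k y).toReal / Real.log k := rfl
      _ ≤ ((W k₀ y).toReal + 2 * (N:ℝ) * Real.log k) / Real.log k :=
          (div_le_div_iff_of_pos_right hlogkpos).2 step2
      _ = (W k₀ y).toReal / Real.log k + 2 * (N:ℝ) := by
          rw [add_div, mul_div_assoc, div_self (ne_of_gt hlogkpos), mul_one]
      _ ≤ (W k₀ y).toReal + 2 * (N:ℝ) := by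
          have := div_le_self (ENNReal.toReal_nonneg (a := W k₀ y)) hlogk
          linarith
  -- pointwise limit
  have hlim : ∀ᵐ y ∂ν, Tendsto (fun k => F k y) atTop (nhds (δ y)) := by
    filter_upwards [hconddim] with y hy
    refine hy.congr' ?_
    filter_upwards [eventually_ge_atTop 1] with k hk1
    have heq : mEnt ((κ y).map (fun x i => qz k (x i))) = (W k y).toReal :=
      mEnt_map_qv hk1 (κ y)
    rw [heq]
  -- DCT
  have hDCT : Tendsto (fun k => ∫ y, F k y ∂ν) atTop (nhds (∫ y, δ y ∂ν)) :=
    tendsto_integral_filter_of_dominated_convergence _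
      (Eventually.of_forall hFmeas) hbound (hGint.add (integrable_const _)) hlim
  have hintF : ∀ k : ℕ, 1 ≤ k →
      ∫ y, F k y ∂ν = condEnt P (fun ω i => qz k (X ω i)) Y / Real.log k := by
    intro k hk
    rw [hcondEnt k hk, ← integral_div]
  have hT1 : Tendsto (fun k : ℕ =>
      condEnt P (fun ω i => qz k (X ω i)) Y / Real.log k) atTop (nhds (∫ y, δ y ∂ν)) := by
    refine hDCT.congr' ?_
    filter_upwards [eventually_ge_atTop 1] with k hk
    exact hintF k hk
  have hT := hT1.div hdim (ne_of_gt hd_pos)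
  refine hT.congr' ?_
  filter_upwards [eventually_ge_atTop 2] with k hk
  have hc : Real.log k ≠ 0 := by
    have h1 : (1:ℝ) < (k:ℝ) := by exact_mod_cast hk
    exact ne_of_gt (Real.log_pos h1)
  rcases eq_or_ne (mEnt (P.map (fun ω i => qz k (X ω i)))) 0 with hb | hb
  · simp [hb]
  · rw [Pi.div_apply]; field_simp
end RelLossAux
end

section
/- Let X, Y, Z be discrete random variables with finite Shannon entropy such that Y = g(X) and Z = h(Y) for deterministic functions g and h. Then the relative information loss satisfies the cascade formula l(X→Z) = l(X→Y) + l(Y→Z) − l(X→Y)·l(Y→Z). -/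
open MeasureTheory ProbabilityTheory Filter Real Set

open scoped ENNReal

lemma mEnt_def {α : Type*} [MeasurableSpace α] (μ : Measure α) :
    mEnt μ = ∑' a : α, Real.negMulLog (μ {a}).toReal := rfl

lemma toReal_prob_le_one {α : Type*} [MeasurableSpace α] (μ : Measure α)
    [IsProbabilityMeasure μ] (s : Set α) : (μ s).toReal ≤ 1 := by
  have h1 : μ s ≤ 1 := prob_le_one
  have := ENNReal.toReal_mono ENNReal.one_ne_top h1
  simpa using this

-- helper: q * negMulLog (p/q) = negMulLog p + p * log q
lemma negMulLog_div_mul {p q : ℝ} (hp : 0 ≤ p) (hq : 0 < q) :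
    q * Real.negMulLog (p / q) = Real.negMulLog p + p * Real.log q := by
  rcases eq_or_lt_of_le hp with h0 | h0
  · simp [← h0, Real.negMulLog]
  · rw [Real.negMulLog, Real.negMulLog, Real.log_div (ne_of_gt h0) (ne_of_gt hq)]
    field_simp
    ring

lemma mEnt_nonneg {α : Type*} [MeasurableSpace α] [MeasurableSingletonClass α]
    (μ : Measure α) [IsProbabilityMeasure μ] : 0 ≤ mEnt μ :=
  tsum_nonneg fun a => Real.negMulLog_nonneg ENNReal.toReal_nonneg
    (toReal_prob_le_one μ {a})

lemma condEnt_nonneg {Ω α β : Type*} [MeasurableSpace Ω] [MeasurableSpace α]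
    [MeasurableSingletonClass α]
    [StandardBorelSpace α] [Nonempty α] [MeasurableSpace β]
    (P : Measure Ω) [IsFiniteMeasure P] (Z : Ω → α) (Y : Ω → β) :
    0 ≤ condEnt P Z Y :=
  integral_nonneg fun y => mEnt_nonneg _

lemma chainEnt {Ω α β : Type*} [MeasurableSpace Ω]
    [MeasurableSpace α] [MeasurableSingletonClass α] [Countable α]
      [StandardBorelSpace α] [Nonempty α]
    [MeasurableSpace β] [MeasurableSingletonClass β] [Countable β]
    (P : Measure Ω) [IsProbabilityMeasure P]
    (X : Ω → α) (hX : Measurable X) (g : α → β) (hg : Measurable g)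
    (hHX : Summable (fun a => Real.negMulLog ((P.map X) {a}).toReal))
    (hHY : Summable (fun b => Real.negMulLog ((P.map (fun ω => g (X ω))) {b}).toReal)) :
    condEnt P X (fun ω => g (X ω)) =
      mEnt (P.map X) - mEnt (P.map (fun ω => g (X ω))) := by
  classical
  set Y : Ω → β := fun ω => g (X ω) with hYdef
  have hY : Measurable Y := hg.comp hX
  set μ := P.map X with hμ
  set ν := P.map Y with hν
  haveI : IsProbabilityMeasure μ := Measure.isProbabilityMeasure_map hX.aemeasurable
  haveI : IsProbabilityMeasure ν := Measure.isProbabilityMeasure_map hY.aemeasurable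
  set p : α → ℝ := fun a => (μ {a}).toReal with hp
  set q : β → ℝ := fun b => (ν {b}).toReal with hq
  set F : α → ℝ := fun a => Real.negMulLog (p a) with hF
  set κ := condDistrib X Y P with hκ
  set S : β → ℝ := fun b => ∑' a : (g ⁻¹' {b} : Set α), F a with hS
  -- fiber decomposition of ν
  have f1 : ∀ b : β, ν {b} = ∑' a : (g ⁻¹' {b} : Set α), μ {↑a} := by
    intro b
    have h1 : ν {b} = μ (g ⁻¹' {b}) := by
      rw [hν, hμ, Measure.map_apply hY (measurableSet_singleton b),
        Measure.map_apply hX (hg (measurableSet_singleton b))]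
      rfl
    have h2 : (∑' a : (g ⁻¹' {b} : Set α), μ (id ⁻¹' {↑a})) = μ (id ⁻¹' (g ⁻¹' {b})) :=
      tsum_measure_preimage_singleton (Set.to_countable _)
        (fun y _ => by simpa using measurableSet_singleton y)
    simpa using h1.trans h2.symm
  have hμfin : ∀ a : α, μ {a} ≠ ⊤ := fun a => measure_ne_top μ _
  have f2 : ∀ b : β, q b = ∑' a : (g ⁻¹' {b} : Set α), p (↑a) := by
    intro b
    rw [hq]
    simp only [f1 b]
    exact ENNReal.tsum_toReal_eq (fun a => hμfin _)
  have hp_nonneg : ∀ a, 0 ≤ p a := fun a => ENNReal.toReal_nonneg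
  have hp_le_one : ∀ a, p a ≤ 1 := fun a => toReal_prob_le_one μ {a}
  have hFs : Summable F := hHX
  have hF_nonneg : ∀ a, 0 ≤ F a := fun a =>
    Real.negMulLog_nonneg (hp_nonneg a) (hp_le_one a)
  have hps : Summable p := ENNReal.summable_toReal (by
    have : (∑' a : α, μ {a}) = μ Set.univ := by
      have := tsum_measure_preimage_singleton (μ := μ) (Set.to_countable (Set.univ : Set α))
        (f := id) (fun y _ => by simpa using measurableSet_singleton y)
      calc (∑' a : α, μ {a}) = ∑' a : (Set.univ : Set α), μ {↑a} := (tsum_univ _).symm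
        _ = μ Set.univ := by simpa using this
    simp [this])
  -- summability of S
  have hSsum : Summable S := ((hFs.hasSum.tsum_fiberwise g).summable)
  have hS_eq_tot : ∑' b, S b = mEnt μ := (hFs.hasSum.tsum_fiberwise g).tsum_eq
  have hS_nonneg : ∀ b, 0 ≤ S b := fun b => tsum_nonneg fun a => hF_nonneg _
  -- key pointwise identity
  have f3 : ∀ b : β, q b * mEnt (κ b) = S b - Real.negMulLog (q b) := by
    intro b
    rcases eq_or_ne (ν {b}) 0 with hb | hb
    · have hqb : q b = 0 := by simp [hq, hb]
      have hfib : ∀ a : (g ⁻¹' {b} : Set α), μ {↑a} = 0 := by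
        intro a
        have := ENNReal.le_tsum (f := fun a : (g ⁻¹' {b} : Set α) => μ {↑a}) a
        rw [← f1 b, hb] at this
        exact le_antisymm this bot_le
      have hSb : S b = 0 := by
        have hz : ∀ a : (g ⁻¹' {b} : Set α), F ↑a = 0 := fun a => by
          simp [hF, hp, hfib a, Real.negMulLog]
        rw [hS]
        simp only [hz, tsum_zero]
      simp [hqb, hSb, Real.negMulLog]
    · have hqb : 0 < q b := ENNReal.toReal_pos hb (measure_ne_top ν _)
      -- compute the conditional kernel
      have hκb : ∀ a : α, κ b {a} = if g a = b then (ν {b})⁻¹ * μ {a} else 0 := by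
        intro a
        rw [hκ, condDistrib_apply_of_ne_zero hX b (by rwa [← hν]) {a}]
        have hmap : P.map (fun ω => (Y ω, X ω)) ({b} ×ˢ {a}) =
            if g a = b then μ {a} else 0 := by
          rw [Measure.map_apply (hY.prodMk hX)
            ((measurableSet_singleton b).prod (measurableSet_singleton a))]
          by_cases hab : g a = b
          · have : (fun ω => (Y ω, X ω)) ⁻¹' ({b} ×ˢ {a}) = X ⁻¹' {a} := by
              ext ω
              simp only [Set.mem_preimage, Set.mem_prod, Set.mem_singleton_iff, hYdef]
              constructor
              · rintro ⟨-, h2⟩; exact h2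
              · intro h2; exact ⟨by rw [h2, hab], h2⟩
            rw [this, if_pos hab, hμ, Measure.map_apply hX (measurableSet_singleton a)]
          · have : (fun ω => (Y ω, X ω)) ⁻¹' ({b} ×ˢ {a}) = ∅ := by
              ext ω
              simp only [Set.mem_preimage, Set.mem_prod, Set.mem_singleton_iff,
                Set.mem_empty_iff_false, iff_false, not_and, hYdef]
              intro h1 h2
              exact hab (by rw [← h2]; exact h1)
            rw [this, if_neg hab]
            simp
        rw [← hν] at *
        rw [hmap]
        by_cases hab : g a = b <;> simp [hab]
      have hκbr : ∀ a : α, (κ b {a}).toReal = if g a = b then p a / q b else 0 := by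
        intro a
        rw [hκb a]
        by_cases hab : g a = b
        · simp only [if_pos hab]
          rw [ENNReal.toReal_mul, ENNReal.toReal_inv]
          rw [div_eq_inv_mul]
        · simp [hab]
      -- mEnt of the kernel measure
      have hsupp : Function.support (fun a => Real.negMulLog ((κ b {a}).toReal)) ⊆
          g ⁻¹' {b} := by
        refine Function.support_subset_iff'.mpr fun a hab => ?_
        rw [hκbr a, if_neg (by simpa using hab)]
        simp [Real.negMulLog]
      have hmEnt : mEnt (κ b) = ∑' a : (g ⁻¹' {b} : Set α),
          Real.negMulLog (p ↑a / q b) := by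
        rw [mEnt_def, ← tsum_subtype_eq_of_support_subset hsupp]
        refine tsum_congr fun a => ?_
        rw [hκbr ↑a, if_pos (show g ↑a = b from a.2)]
      rw [hmEnt, ← tsum_mul_left]
      have hterm : ∀ a : (g ⁻¹' {b} : Set α),
          q b * Real.negMulLog (p ↑a / q b) = F ↑a + p ↑a * Real.log (q b) := fun a =>
        negMulLog_div_mul (hp_nonneg _) hqb
      rw [tsum_congr hterm]
      have hFsub : Summable fun a : (g ⁻¹' {b} : Set α) => F ↑a :=
        hFs.comp_injective Subtype.coe_injective
      have hpsub : Summable fun a : (g ⁻¹' {b} : Set α) => p ↑a * Real.log (q b) :=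
        (hps.comp_injective Subtype.coe_injective).mul_right _
      rw [Summable.tsum_add hFsub hpsub, tsum_mul_right, ← f2 b]
      have hSb : S b = ∑' a : (g ⁻¹' {b} : Set α), F ↑a := rfl
      rw [Real.negMulLog, ← hSb]
      ring
  -- integrability
  have hf_nonneg : ∀ b, 0 ≤ mEnt (κ b) := fun b => mEnt_nonneg (κ b)
  have hInt : Integrable (fun b => mEnt (κ b)) ν := by
    constructor
    · exact (measurable_of_countable _).aestronglyMeasurable
    · rw [HasFiniteIntegral, lintegral_countable']
      calc (∑' b, (‖mEnt (κ b)‖₊ : ℝ≥0∞) * ν {b})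
          ≤ ∑' b, ENNReal.ofReal (S b) := by
            refine ENNReal.tsum_le_tsum fun b => ?_
            rw [show (‖mEnt (κ b)‖₊ : ℝ≥0∞) = ‖mEnt (κ b)‖ₑ from rfl, Real.enorm_eq_ofReal (hf_nonneg b), ← ENNReal.ofReal_toReal
              (measure_ne_top ν {b}), ← ENNReal.ofReal_mul (hf_nonneg b)]
            refine ENNReal.ofReal_le_ofReal ?_
            have := f3 b
            rw [mul_comm] at this
            rw [this]
            have h2 : 0 ≤ Real.negMulLog (q b) := Real.negMulLog_nonneg
              ENNReal.toReal_nonneg (toReal_prob_le_one ν {b})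
            linarith
        _ = ENNReal.ofReal (∑' b, S b) :=
            (ENNReal.ofReal_tsum_of_nonneg hS_nonneg hSsum).symm
        _ < ⊤ := ENNReal.ofReal_lt_top
  -- put it together
  have : condEnt P X Y = ∑' b, (ν {b}).toReal • mEnt (κ b) := by
    rw [condEnt, ← hν, ← hκ]
    exact integral_countable' hInt
  rw [this]
  have : ∀ b : β, (ν {b}).toReal • mEnt (κ b) = S b - Real.negMulLog (q b) := by
    intro b
    rw [smul_eq_mul]
    exact f3 b
  rw [tsum_congr this, Summable.tsum_sub hSsum hHY, hS_eq_tot]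
  rfl


/-- For discrete random variables `X`, `Y = g(X)`, `Z = h(Y)` with finite
Shannon entropy, the relative information loss `l(X→Y) = H(X|Y)/H(X)` satisfies the cascade
formula `l(X→Z) = l(X→Y) + l(Y→Z) − l(X→Y)·l(Y→Z)`. -/
theorem relative_loss_cascade_discrete
    {Ω α β γ : Type*} [MeasurableSpace Ω]
    [MeasurableSpace α] [MeasurableSingletonClass α] [Countable α]
      [StandardBorelSpace α] [Nonempty α]
    [MeasurableSpace β] [MeasurableSingletonClass β] [Countable β]
      [StandardBorelSpace β] [Nonempty β]
    [MeasurableSpace γ] [MeasurableSingletonClass γ] [Countable γ]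
      [StandardBorelSpace γ] [Nonempty γ]
    (P : Measure Ω) [IsProbabilityMeasure P]
    (X : Ω → α) (hX : Measurable X)
    (g : α → β) (hg : Measurable g) (h : β → γ) (hh : Measurable h)
    (hHX : Summable (fun a => Real.negMulLog ((P.map X) {a}).toReal))
    (hHY : Summable (fun b => Real.negMulLog ((P.map (fun ω => g (X ω))) {b}).toReal))
    (hHZ : Summable (fun c => Real.negMulLog ((P.map (fun ω => h (g (X ω)))) {c}).toReal)) :
    condEnt P X (fun ω => h (g (X ω))) / mEnt (P.map X) =
      condEnt P X (fun ω => g (X ω)) / mEnt (P.map X)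
        + condEnt P (fun ω => g (X ω)) (fun ω => h (g (X ω))) /
            mEnt (P.map (fun ω => g (X ω)))
        - (condEnt P X (fun ω => g (X ω)) / mEnt (P.map X))
            * (condEnt P (fun ω => g (X ω)) (fun ω => h (g (X ω))) /
                mEnt (P.map (fun ω => g (X ω)))) := by
  have e1 : condEnt P X (fun ω => h (g (X ω))) =
      mEnt (P.map X) - mEnt (P.map (fun ω => h (g (X ω)))) :=
    chainEnt P X hX (h ∘ g) (hh.comp hg) hHX hHZ
  have e2 : condEnt P X (fun ω => g (X ω)) =
      mEnt (P.map X) - mEnt (P.map (fun ω => g (X ω))) :=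
    chainEnt P X hX g hg hHX hHY
  have e3 : condEnt P (fun ω => g (X ω)) (fun ω => h (g (X ω))) =
      mEnt (P.map (fun ω => g (X ω))) - mEnt (P.map (fun ω => h (g (X ω)))) :=
    chainEnt P (fun ω => g (X ω)) (hg.comp hX) h hh hHY hHZ
  set A := mEnt (P.map X) with hA
  set B := mEnt (P.map (fun ω => g (X ω))) with hB
  set C := mEnt (P.map (fun ω => h (g (X ω)))) with hC
  haveI : IsProbabilityMeasure (P.map X) := Measure.isProbabilityMeasure_map hX.aemeasurable
  haveI : IsProbabilityMeasure (P.map (fun ω => g (X ω))) :=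
    Measure.isProbabilityMeasure_map (hg.comp hX).aemeasurable
  haveI : IsProbabilityMeasure (P.map (fun ω => h (g (X ω)))) :=
    Measure.isProbabilityMeasure_map ((hh.comp hg).comp hX).aemeasurable
  have hA0 : 0 ≤ A := mEnt_nonneg _
  have hB0 : 0 ≤ B := mEnt_nonneg _
  have hC0 : 0 ≤ C := mEnt_nonneg _
  have hBA : B ≤ A := by
    have := condEnt_nonneg P X (fun ω => g (X ω))
    rw [e2] at this; linarith
  have hCB : C ≤ B := by
    have := condEnt_nonneg P (fun ω => g (X ω)) (fun ω => h (g (X ω)))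
    rw [e3] at this; linarith
  rw [e1, e2, e3]
  rcases eq_or_ne A 0 with hAz | hAz
  · have hBz : B = 0 := le_antisymm (hAz ▸ hBA) hB0
    have hCz : C = 0 := le_antisymm (hBz ▸ hCB) hC0
    simp [hAz, hBz, hCz]
  · rcases eq_or_ne B 0 with hBz | hBz
    · have hCz : C = 0 := le_antisymm (hBz ▸ hCB) hC0
      simp [hBz, hCz]
    · field_simp
      ring
end
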